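/- Let A, B, C, δ be complex, C not a nonpositive integer, and let D_N be complex numbers with D_N/N → q ∈ (0,1) as N → ∞ (uniformly bounded away from 1). Then ₃F₂[A, B, D_N; N+δ, C; 1] = Σ_{k≥0} (A)_k(B)_k(D_N)_k/(k!(N+δ)_k(C)_k) converges, for N large, and tends to ₂F₁[A, B; C; q] as N → ∞. -/

import Mathlib

/-- Pochhammer symbol `(x)_k = x(x+1)⋯(x+k-1)` for a complex number. -/
def poch (x : ℂ) (k : ℕ) : ℂ := ∏ i ∈ Finset.range k, (x + i)

open Filter Finset

lemma lim_cdivN (c : ℂ) : Tendsto (fun N : ℕ => c / (N : ℂ)) atTop (nhds 0) := by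
  rw [tendsto_zero_iff_norm_tendsto_zero]
  have : ∀ N : ℕ, ‖c / (N : ℂ)‖ = ‖c‖ / (N : ℝ) := by
    intro N; rw [norm_div, Complex.norm_natCast]
  simp only [this]
  exact tendsto_const_div_atTop_nhds_zero_nat ‖c‖

lemma lim_frac {D : ℕ → ℂ} {q : ℝ}
    (hlim : Tendsto (fun N : ℕ => D N / (N : ℂ)) atTop (nhds (q : ℂ)))
    (c w : ℂ) :
    Tendsto (fun N : ℕ => (D N + c) / ((N : ℂ) + w)) atTop (nhds (q : ℂ)) := by
  have h1 : Tendsto (fun N : ℕ => (D N + c) / (N : ℂ)) atTop (nhds (q : ℂ)) := by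
    have := hlim.add (lim_cdivN c)
    simp only [add_zero] at this
    refine this.congr fun N => ?_
    rw [add_div]
  have h2 : Tendsto (fun N : ℕ => ((N : ℂ) + w) / (N : ℂ)) atTop (nhds 1) := by
    have := (lim_cdivN w).const_add (1 : ℂ)
    simp only [add_zero] at this
    refine Tendsto.congr' ?_ this
    filter_upwards [eventually_ge_atTop 1] with N hN
    have hz : (N : ℂ) ≠ 0 := Nat.cast_ne_zero.2 (by omega)
    field_simp
  have h3 := h1.div h2 one_ne_zero
  simp only [div_one] at h3
  refine Tendsto.congr' ?_ h3
  filter_upwards [eventually_ge_atTop 1] with N hN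
  have hz : (N : ℂ) ≠ 0 := Nat.cast_ne_zero.2 (by omega)
  show (D N + c) / (N : ℂ) / (((N : ℂ) + w) / (N : ℂ)) = _
  rcases eq_or_ne ((N : ℂ) + w) 0 with h | h
  · simp [h]
  · field_simp

lemma lim_ratio {D : ℕ → ℂ} {q : ℝ} (δ : ℂ)
    (hlim : Tendsto (fun N : ℕ => D N / (N : ℂ)) atTop (nhds (q : ℂ))) (k : ℕ) :
    Tendsto (fun N : ℕ => poch (D N) k / poch ((N : ℂ) + δ) k) atTop (nhds ((q : ℂ) ^ k)) := by
  induction k with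
  | zero => simp [poch]
  | succ n ih =>
      have he : ∀ N : ℕ, poch (D N) (n+1) / poch ((N : ℂ) + δ) (n+1)
          = (poch (D N) n / poch ((N : ℂ) + δ) n) * ((D N + n) / ((N : ℂ) + (δ + n))) := by
        intro N
        simp only [poch, prod_range_succ]
        rw [mul_div_mul_comm, add_assoc]
      simp only [he, pow_succ]
      exact ih.mul (lim_frac hlim (n : ℂ) (δ + n))

lemma tel1 (x : ℝ) (hx : 0 < x) (k : ℕ) :
    ∏ i ∈ range k, (x + 1 + i) / (x + i) = (x + k) / x := by
  induction k with
  | zero => simp [div_self (ne_of_gt hx)]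
  | succ n ih =>
      rw [prod_range_succ, ih]
      have h1 : x + (n : ℝ) ≠ 0 := by positivity
      have h2 : x ≠ 0 := ne_of_gt hx
      field_simp
      push_cast
      ring

lemma tel (d : ℕ) : ∀ x : ℝ, 0 < x → ∀ k : ℕ,
    ∏ i ∈ range k, (x + d + i) / (x + i) = ∏ j ∈ range d, (x + k + j) / (x + j) := by
  induction d with
  | zero =>
      intro x hx k
      rw [prod_div_distrib]
      simp only [Nat.cast_zero, add_zero]
      rw [div_self]
      · simp
      · exact prod_ne_zero_iff.2 fun i _ => by positivity
  | succ n ih =>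
      intro x hx k
      have key : ∀ i : ℕ, (x + (n+1 : ℕ) + i) / (x + i)
          = ((x+1) + n + i) / ((x+1) + i) * ((x + 1 + i) / (x + i)) := by
        intro i
        have h1 : x + 1 + (i : ℝ) ≠ 0 := by positivity
        rw [div_mul_div_comm,
          show ((x+1) + n + i) * (x + 1 + i) = (x + 1 + i) * (x + (n+1:ℕ) + (i:ℝ)) by push_cast; ring,
          show (x + 1 + (i:ℝ)) * (x + i) = (x + 1 + i) * (x + (i:ℝ)) by ring,
          mul_div_mul_left _ _ h1]
      calc ∏ i ∈ range k, (x + (n+1 : ℕ) + i) / (x + i)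
          = ∏ i ∈ range k, (((x+1) + n + i) / ((x+1) + i) * ((x + 1 + i) / (x + i))) :=
            prod_congr rfl fun i _ => key i
        _ = (∏ i ∈ range k, ((x+1) + n + i) / ((x+1) + i)) * ∏ i ∈ range k, (x + 1 + i) / (x + i) :=
            prod_mul_distrib
        _ = (∏ j ∈ range n, ((x+1) + k + j) / ((x+1) + j)) * ((x + k) / x) := by
            rw [ih (x+1) (by linarith) k, tel1 x hx k]
        _ = ∏ j ∈ range (n+1), (x + k + j) / (x + j) := by
            rw [prod_range_succ']
            have : ∀ j : ℕ, (x + (k:ℝ) + (j+1:ℕ)) / (x + (j+1:ℕ)) = ((x+1) + k + j) / ((x+1) + j) := by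
              intro j; push_cast; ring_nf
            simp only [this, Nat.cast_zero, add_zero]

lemma Cbound (C : ℂ) (hC : ∀ n : ℕ, C ≠ -(n : ℂ)) :
    ∃ M : ℝ, 0 < M ∧ ∀ k : ℕ,
      ∏ i ∈ range k, ((1 + (i : ℝ)) / ‖C + i‖) ≤ M * ((k : ℝ) + 1) ^ (⌈‖C‖⌉₊ + 2) := by
  set m := ⌈‖C‖⌉₊ with hm
  set T := m + 2 with hT
  set k₂ := m ^ 2 + 3 * m + 1 with hk₂
  have hpos : ∀ i : ℕ, 0 < ‖C + i‖ := by
    intro i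
    rw [norm_pos_iff]
    intro h
    exact hC i (eq_neg_of_add_eq_zero_left h)
  set P : ℕ → ℝ := fun k => ∏ i ∈ range k, ((1 + (i : ℝ)) / ‖C + i‖) with hPdef
  have hPnn : ∀ k, 0 ≤ P k := by
    intro k; apply prod_nonneg; intro i _; positivity
  set w : ℕ → ℝ := fun k => P k / ((k : ℝ) + 1) ^ T with hwdef
  have hwnn : ∀ k, 0 ≤ w k := by intro k; apply div_nonneg (hPnn k); positivity
  have hCk : ∀ k : ℕ, (k : ℝ) - m ≤ ‖C + k‖ := by
    intro k
    have h1 : ‖(k : ℂ)‖ ≤ ‖C + k‖ + ‖C‖ := by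
      calc ‖(k : ℂ)‖ = ‖(C + k) + (-C)‖ := by ring_nf
        _ ≤ ‖C + (k : ℂ)‖ + ‖-C‖ := norm_add_le _ _
        _ = ‖C + k‖ + ‖C‖ := by rw [norm_neg]
    rw [Complex.norm_natCast] at h1
    have h2 : ‖C‖ ≤ m := Nat.le_ceil _
    linarith
  have hdec : ∀ k : ℕ, k₂ ≤ k → w (k + 1) ≤ w k := by
    intro k hk
    have hkR : (m : ℝ) ^ 2 + 3 * m + 1 ≤ (k : ℝ) := by
      have : (k₂ : ℝ) ≤ (k : ℝ) := Nat.cast_le.2 hk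
      push_cast [hk₂] at this ⊢; linarith
    have key : (1 + (k : ℝ)) * ((k : ℝ) + 1) ^ T ≤ ‖C + k‖ * ((k : ℝ) + 2) ^ T := by
      have hb : (1 : ℝ) + T * (1 / ((k : ℝ) + 1)) ≤ (1 + 1 / ((k : ℝ) + 1)) ^ T := by
        apply one_add_mul_le_pow
        have : (0:ℝ) ≤ 1 / ((k : ℝ) + 1) := by positivity
        linarith
      have hk1 : (0:ℝ) < (k : ℝ) + 1 := by positivity
      have hexp : ((k : ℝ) + 2) ^ T = ((k : ℝ) + 1) ^ T * (1 + 1 / ((k : ℝ) + 1)) ^ T := by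
        rw [← mul_pow]; congr 1; field_simp; ring
      have hmono : (k:ℝ) - m ≤ ‖C + k‖ := hCk k
      have hTsplit : ((k : ℝ) + 1) ^ T = ((k : ℝ) + 1) ^ (T - 1) * ((k : ℝ) + 1) := by
        rw [← pow_succ]; congr 1
      have hTk : ((k : ℝ) + 1) ^ T * (1 + (T:ℝ) * (1 / ((k : ℝ) + 1))) =
          ((k : ℝ) + 1) ^ (T - 1) * (((k : ℝ) + 1) + T) := by
        rw [hTsplit]; field_simp
      have hq : (1 + (k : ℝ)) * ((k : ℝ) + 1) ≤ ((k : ℝ) - m) * (((k : ℝ) + 1) + T) := by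
        have hTR : (T : ℝ) = (m : ℝ) + 2 := by push_cast [hT]; ring
        rw [hTR]; nlinarith [hkR]
      calc (1 + (k : ℝ)) * ((k : ℝ) + 1) ^ T
          = ((k : ℝ) + 1) ^ (T - 1) * ((1 + (k : ℝ)) * ((k : ℝ) + 1)) := by
            rw [hTsplit]; ring
        _ ≤ ((k : ℝ) + 1) ^ (T - 1) * (((k : ℝ) - m) * (((k : ℝ) + 1) + T)) := by
            apply mul_le_mul_of_nonneg_left hq (by positivity)
        _ = ((k : ℝ) - m) * (((k : ℝ) + 1) ^ T * (1 + (T:ℝ) * (1 / ((k : ℝ) + 1)))) := by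
            rw [hTk]; ring
        _ ≤ ‖C + k‖ * (((k : ℝ) + 1) ^ T * (1 + 1 / ((k : ℝ) + 1)) ^ T) := by
            apply mul_le_mul hmono
            · apply mul_le_mul_of_nonneg_left hb (by positivity)
            · have : (0:ℝ) ≤ 1 + (T:ℝ) * (1 / ((k:ℝ)+1)) := by positivity
              positivity
            · exact (hpos k).le
        _ = ‖C + k‖ * ((k : ℝ) + 2) ^ T := by rw [← hexp]
    have hPk : P (k + 1) = P k * ((1 + (k : ℝ)) / ‖C + k‖) := prod_range_succ _ _
    have hgoal : w (k+1) = P (k+1) / ((k:ℝ) + 1 + 1) ^ T := by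
      simp only [hwdef]; push_cast; ring_nf
    rw [hgoal, hPk]
    show _ ≤ P k / ((k:ℝ) + 1) ^ T
    have h2 : ((k:ℝ) + 1 + 1) = ((k:ℝ) + 2) := by ring
    rw [h2]
    rw [div_le_div_iff₀ (by positivity) (by positivity)]
    have : (1 + (k : ℝ)) / ‖C + k‖ * ((k:ℝ)+1) ^ T ≤ ((k:ℝ) + 2) ^ T := by
      rw [div_mul_eq_mul_div, div_le_iff₀ (hpos k)]
      calc (1 + (k : ℝ)) * ((k : ℝ) + 1) ^ T ≤ ‖C + k‖ * ((k : ℝ) + 2) ^ T := key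
        _ = ((k:ℝ)+2)^T * ‖C + k‖ := by ring
    calc P k * ((1 + (k : ℝ)) / ‖C + k‖) * ((k:ℝ)+1) ^ T
        = P k * ((1 + (k : ℝ)) / ‖C + k‖ * ((k:ℝ)+1) ^ T) := by ring
      _ ≤ P k * ((k:ℝ) + 2) ^ T := mul_le_mul_of_nonneg_left this (hPnn k)
      _ = P k * ((k:ℝ) + 2) ^ T := rfl
  have hmono : ∀ k, k₂ ≤ k → w k ≤ w k₂ := by
    intro k hk
    induction k, hk using Nat.le_induction with
    | base => exact le_refl _
    | succ n hn ih => exact (hdec n hn).trans ih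
  set W := (∑ j ∈ range (k₂ + 1), w j) + 1 with hW
  have hWpos : 0 < W := by
    have : 0 ≤ ∑ j ∈ range (k₂ + 1), w j := sum_nonneg fun j _ => hwnn j
    linarith
  have hwW : ∀ k, w k ≤ W := by
    intro k
    rcases le_or_gt k k₂ with h | h
    · have := single_le_sum (f := w) (fun j _ => hwnn j) (mem_range.2 (by omega : k < k₂ + 1))
      linarith
    · have h1 := hmono k h.le
      have := single_le_sum (f := w) (fun j _ => hwnn j) (mem_range.2 (by omega : k₂ < k₂ + 1))
      linarith
  refine ⟨W, hWpos, fun k => ?_⟩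
  have := hwW k
  rw [hwdef] at this
  simp only [] at this
  rw [div_le_iff₀ (by positivity)] at this
  exact this

lemma helper1 (a b c f g : ℝ) (hc : c ≠ 0) : a / c * (b / c) * (c / f) * g = a * b / (c * f) * g := by
  have h : a / c * (b / c) * (c / f) = a * b / (c * f) := by
    rw [div_mul_div_comm, div_mul_div_comm,
      show a * b * c = c * (a * b) by ring, show c * c * f = c * (c * f) by ring,
      mul_div_mul_left _ _ hc]
  rw [h]

lemma helper2 (a b c f x y : ℝ) : a * b * x / (c * y * f) = a * b / (c * f) * (x / y) := by
  simp only [div_eq_mul_inv, mul_inv]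
  ring

set_option maxHeartbeats 1000000 in
/-- If `D_N/N → q ∈ (0,1)`, the series
`₃F₂[A, B, D_N; N+δ, C; 1]` converge for large `N` and tend to `₂F₁[A, B; C; q]`. -/
theorem stmt_12 (A B C δ : ℂ) (hC : ∀ n : ℕ, C ≠ -(n : ℂ))
    (D : ℕ → ℂ) (q : ℝ) (hq0 : 0 < q) (hq1 : q < 1)
    (hlim : Filter.Tendsto (fun N : ℕ => D N / (N : ℂ)) Filter.atTop (nhds (q : ℂ))) :
    (∀ᶠ N : ℕ in Filter.atTop,
      Summable (fun k : ℕ => poch A k * poch B k * poch (D N) k /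
        ((k.factorial : ℂ) * poch ((N : ℂ) + δ) k * poch C k))) ∧
    Filter.Tendsto
      (fun N : ℕ => ∑' k : ℕ, poch A k * poch B k * poch (D N) k /
        ((k.factorial : ℂ) * poch ((N : ℂ) + δ) k * poch C k))
      Filter.atTop
      (nhds (∑' k : ℕ, poch A k * poch B k * (q : ℂ) ^ k /
        ((k.factorial : ℂ) * poch C k))) := by
  have hCpos : ∀ i : ℕ, 0 < ‖C + i‖ := by
    intro i
    rw [norm_pos_iff]
    intro h
    exact hC i (eq_neg_of_add_eq_zero_left h)
  set q' : ℝ := (1 + q) / 2 with hq'def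
  have hq'0 : 0 < q' := by rw [hq'def]; linarith
  have hqq' : q < q' := by rw [hq'def]; linarith
  have hq'1 : q' < 1 := by rw [hq'def]; linarith
  set dδ : ℝ := ‖δ‖ with hdδdef
  have hdδ0 : 0 ≤ dδ := norm_nonneg δ
  set mA : ℕ := ⌈‖A‖⌉₊ with hmAdef
  set mB : ℕ := ⌈‖B‖⌉₊ with hmBdef
  set mC : ℕ := ⌈‖C‖⌉₊ with hmCdef
  set T : ℕ := mC + 2 with hTdef
  set S : ℕ := mA + mB + T + 2 with hSdef
  obtain ⟨Mc, hMc0, hMc⟩ := Cbound C hC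
  -- eventual conditions
  have hDn : Tendsto (fun N : ℕ => ‖D N / (N : ℂ)‖) atTop (nhds q) := by
    have h := hlim.norm
    have hq : ‖(q : ℂ)‖ = q := by
      rw [Complex.norm_real, Real.norm_eq_abs, abs_of_pos hq0]
    rwa [hq] at h
  have hev1 : ∀ᶠ N : ℕ in atTop, ‖D N / (N : ℂ)‖ < q' := hDn.eventually_lt_const hqq'
  have hev2 : ∀ᶠ N : ℕ in atTop, (1 : ℝ) ≤ q' * N := by
    have h : Tendsto (fun N : ℕ => q' * (N : ℝ)) atTop atTop :=
      (tendsto_natCast_atTop_atTop (R := ℝ)).const_mul_atTop hq'0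
    exact h.eventually_ge_atTop 1
  have hev3 : ∀ᶠ N : ℕ in atTop, (S : ℝ) + dδ + 1 ≤ (1 - q') * N := by
    have h : Tendsto (fun N : ℕ => (1 - q') * (N : ℝ)) atTop atTop :=
      (tendsto_natCast_atTop_atTop (R := ℝ)).const_mul_atTop (by linarith)
    exact h.eventually_ge_atTop _
  obtain ⟨N₁, hN₁⟩ := eventually_atTop.mp ((hev1.and (hev2.and hev3)).and (eventually_ge_atTop 1))
  set u : ℝ := q' * N₁ with hudef
  have hu1 : 1 ≤ u := (hN₁ N₁ le_rfl).1.2.1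
  have hu0 : 0 < u := by linarith
  have hN₁S : (S : ℝ) + dδ + 1 ≤ (1 - q') * N₁ := (hN₁ N₁ le_rfl).1.2.2
  have hDN : ∀ N, N₁ ≤ N → ‖D N‖ ≤ q' * N := by
    intro N hN
    have h := (hN₁ N hN).1.1
    have h1 : 1 ≤ N := (hN₁ N hN).2
    have hNpos : (0 : ℝ) < N := by exact_mod_cast Nat.lt_of_lt_of_le Nat.zero_lt_one h1
    rw [norm_div, Complex.norm_natCast] at h
    exact le_of_lt ((div_lt_iff₀ hNpos).mp h)
  -- bound function
  set bound : ℕ → ℝ := fun k => (Mc * (u + S) ^ S) / ((k : ℝ) + 1) ^ 2 with hbdef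
  have hbound_sum : Summable bound := by
    have h0 : Summable (fun n : ℕ => 1 / (n : ℝ) ^ 2) :=
      Real.summable_one_div_nat_pow.mpr (by norm_num)
    have h2 : Summable (fun n : ℕ => 1 / ((n : ℝ) + 1) ^ 2) := by
      have := (summable_nat_add_iff (f := fun n : ℕ => 1 / (n : ℝ) ^ 2) 1).mpr h0
      refine this.congr fun n => ?_
      push_cast
      ring
    have := h2.mul_left (Mc * (u + S) ^ S)
    refine this.congr fun n => ?_
    rw [hbdef]
    simp only []
    rw [mul_one_div]
  -- domination
  have hdom : ∀ N, N₁ ≤ N → ∀ k : ℕ,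
      ‖poch A k * poch B k * poch (D N) k /
        ((k.factorial : ℂ) * poch ((N : ℂ) + δ) k * poch C k)‖ ≤ bound k := by
    intro N hN k
    have hNN₁ : (N₁ : ℝ) ≤ N := Nat.cast_le.2 hN
    have hN1 : (1 : ℕ) ≤ N := le_trans (hN₁ N₁ le_rfl).2 hN
    have hSN : (S : ℝ) + dδ + 1 ≤ (1 - q') * N := (hN₁ N hN).1.2.2
    have hDb : ‖D N‖ ≤ q' * N := hDN N hN
    have hNr0 : (0 : ℝ) ≤ N := Nat.cast_nonneg N
    have hNdδ : 1 ≤ (N : ℝ) - dδ := by nlinarith [hSN, (Nat.cast_nonneg S : (0:ℝ) ≤ (S:ℝ))]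
    -- step A : norm as a product
    have hfact : (k.factorial : ℝ) = ∏ i ∈ range k, (1 + (i : ℝ)) := by
      rw [← Finset.prod_range_add_one_eq_factorial k]
      push_cast
      exact prod_congr rfl fun i _ => by ring
    have hnorm : ‖poch A k * poch B k * poch (D N) k /
        ((k.factorial : ℂ) * poch ((N : ℂ) + δ) k * poch C k)‖
        = ∏ i ∈ range k, (‖A + i‖ * ‖B + i‖ * ‖D N + i‖ /
            ((1 + (i : ℝ)) * ‖(N : ℂ) + δ + i‖ * ‖C + i‖)) := by
      rw [norm_div, norm_mul, norm_mul, norm_mul, norm_mul, Complex.norm_natCast]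
      simp only [poch, norm_prod]
      rw [hfact, ← prod_mul_distrib, ← prod_mul_distrib, ← prod_mul_distrib,
        ← prod_mul_distrib, ← prod_div_distrib]
    rw [hnorm]
    -- step B : per-index bound
    set rhs : ℕ → ℝ := fun i => ((mA : ℝ) + 1 + i) / (1 + i) * (((mB : ℝ) + 1 + i) / (1 + i)) *
        ((1 + (i : ℝ)) / ‖C + i‖) * ((u + i) / (u + (S : ℝ) + i)) with hrhsdef
    have hperindex : ∀ i ∈ range k,
        ‖A + i‖ * ‖B + i‖ * ‖D N + i‖ /
          ((1 + (i : ℝ)) * ‖(N : ℂ) + δ + i‖ * ‖C + i‖) ≤ rhs i := by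
      intro i _
      have hi0 : (0 : ℝ) ≤ i := Nat.cast_nonneg i
      have h1i : (0 : ℝ) < 1 + i := by linarith
      have hCi := hCpos i
      have hNd : (N : ℝ) - dδ + i ≤ ‖(N : ℂ) + δ + i‖ := by
        have h1 : ‖(N : ℂ) + (i : ℂ)‖ ≤ ‖(N : ℂ) + δ + i‖ + ‖δ‖ := by
          calc ‖(N : ℂ) + (i : ℂ)‖ = ‖((N : ℂ) + δ + i) + (-δ)‖ := by ring_nf
            _ ≤ ‖(N : ℂ) + δ + (i : ℂ)‖ + ‖-δ‖ := norm_add_le _ _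
            _ = ‖(N : ℂ) + δ + i‖ + ‖δ‖ := by rw [norm_neg]
        have h2 : ‖(N : ℂ) + (i : ℂ)‖ = (N : ℝ) + i := by
          rw [show (N : ℂ) + (i : ℂ) = (((N : ℝ) + (i : ℝ) : ℝ) : ℂ) by push_cast; ring,
            Complex.norm_real, Real.norm_eq_abs, abs_of_nonneg (by linarith)]
        rw [h2] at h1
        linarith
      have hNdpos : (0 : ℝ) < (N : ℝ) - dδ + i := by linarith
      have hA : ‖A + i‖ ≤ (mA : ℝ) + 1 + i := by
        have := norm_add_le A (i : ℂ)
        rw [Complex.norm_natCast] at this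
        have h2 : ‖A‖ ≤ (mA : ℝ) := Nat.le_ceil _
        linarith
      have hB : ‖B + i‖ ≤ (mB : ℝ) + 1 + i := by
        have := norm_add_le B (i : ℂ)
        rw [Complex.norm_natCast] at this
        have h2 : ‖B‖ ≤ (mB : ℝ) := Nat.le_ceil _
        linarith
      have hDi : ‖D N + i‖ ≤ q' * N + i := by
        have := norm_add_le (D N) (i : ℂ)
        rw [Complex.norm_natCast] at this
        linarith
      have hqN0 : (0 : ℝ) < q' * N := by
        have : (1:ℝ) ≤ q' * N := (hN₁ N hN).1.2.1
        linarith
      -- lhs ≤ mid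
      have hmid : ‖A + i‖ * ‖B + i‖ * ‖D N + i‖ /
            ((1 + (i : ℝ)) * ‖(N : ℂ) + δ + i‖ * ‖C + i‖)
          ≤ ((mA : ℝ) + 1 + i) * ((mB : ℝ) + 1 + i) * (q' * N + i) /
            ((1 + (i : ℝ)) * ((N : ℝ) - dδ + i) * ‖C + i‖) := by
        apply div_le_div₀ (by positivity)
        · apply mul_le_mul (mul_le_mul hA hB (norm_nonneg _) (by positivity)) hDi
            (norm_nonneg _) (by positivity)
        · positivity
        · apply mul_le_mul_of_nonneg_right _ hCi.le
          exact mul_le_mul_of_nonneg_left hNd h1i.le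
      -- mid ≤ rhs
      have key : (q' * N + i) * (u + S + i) ≤ (u + i) * ((N : ℝ) - dδ + i) := by
        have hp3 : (i : ℝ) * ((S : ℝ) + dδ + 1) ≤ i * ((1 - q') * N) :=
          mul_le_mul_of_nonneg_left hSN hi0
        have hp1 : (N : ℝ) * ((S : ℝ) + dδ + 1) ≤ (N : ℝ) * ((1 - q') * N₁) :=
          mul_le_mul_of_nonneg_left hN₁S hNr0
        have hp2 : (N₁ : ℝ) * dδ ≤ (N : ℝ) * dδ := mul_le_mul_of_nonneg_right hNN₁ hdδ0
        have hp4 : q' * ((N : ℝ) * ((S : ℝ) + dδ + 1)) ≤ q' * ((N : ℝ) * ((1 - q') * N₁)) :=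
          mul_le_mul_of_nonneg_left hp1 hq'0.le
        have hp5 : q' * ((N₁ : ℝ) * dδ) ≤ q' * ((N : ℝ) * dδ) :=
          mul_le_mul_of_nonneg_left hp2 hq'0.le
        rw [hudef]
        nlinarith [hp3, hp4, hp5, mul_nonneg hq'0.le hNr0, mul_nonneg hi0 hdδ0]
      have hcomm : (0 : ℝ) ≤ ((mA : ℝ) + 1 + i) * ((mB : ℝ) + 1 + i) / ((1 + (i : ℝ)) * ‖C + i‖) := by
        positivity
      have huSi : (0 : ℝ) < u + S + i := by
        have : (0:ℝ) ≤ (S : ℝ) := Nat.cast_nonneg S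
        linarith
      have hfrac : (q' * N + i) / ((N : ℝ) - dδ + i) ≤ (u + i) / (u + (S : ℝ) + i) :=
        (div_le_div_iff₀ hNdpos huSi).mpr key
      have e1 : ((mA : ℝ) + 1 + i) * ((mB : ℝ) + 1 + i) * (q' * N + i) /
            ((1 + (i : ℝ)) * ((N : ℝ) - dδ + i) * ‖C + i‖)
          = ((mA : ℝ) + 1 + i) * ((mB : ℝ) + 1 + i) / ((1 + (i : ℝ)) * ‖C + i‖) *
            ((q' * N + i) / ((N : ℝ) - dδ + i)) := helper2 _ _ _ _ _ _
      have e2 : rhs i = ((mA : ℝ) + 1 + i) * ((mB : ℝ) + 1 + i) / ((1 + (i : ℝ)) * ‖C + i‖) *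
            ((u + i) / (u + (S : ℝ) + i)) := by
        rw [hrhsdef]
        exact helper1 _ _ _ _ _ (ne_of_gt h1i)
      calc ‖A + i‖ * ‖B + i‖ * ‖D N + i‖ /
            ((1 + (i : ℝ)) * ‖(N : ℂ) + δ + i‖ * ‖C + i‖)
          ≤ ((mA : ℝ) + 1 + i) * ((mB : ℝ) + 1 + i) * (q' * N + i) /
            ((1 + (i : ℝ)) * ((N : ℝ) - dδ + i) * ‖C + i‖) := hmid
        _ = _ := e1
        _ ≤ ((mA : ℝ) + 1 + i) * ((mB : ℝ) + 1 + i) / ((1 + (i : ℝ)) * ‖C + i‖) *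
            ((u + i) / (u + (S : ℝ) + i)) := mul_le_mul_of_nonneg_left hfrac hcomm
        _ = rhs i := e2.symm
    have hstepB : ∏ i ∈ range k, (‖A + i‖ * ‖B + i‖ * ‖D N + i‖ /
          ((1 + (i : ℝ)) * ‖(N : ℂ) + δ + i‖ * ‖C + i‖)) ≤ ∏ i ∈ range k, rhs i := by
      apply Finset.prod_le_prod
      · intro i _; positivity
      · exact hperindex
    -- step C : split the rhs product
    have hsplit : ∏ i ∈ range k, rhs i
        = (∏ i ∈ range k, ((mA : ℝ) + 1 + i) / (1 + i)) *
          (∏ i ∈ range k, ((mB : ℝ) + 1 + i) / (1 + i)) *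
          (∏ i ∈ range k, (1 + (i : ℝ)) / ‖C + i‖) *
          (∏ i ∈ range k, (u + i) / (u + (S : ℝ) + i)) := by
      rw [hrhsdef, ← prod_mul_distrib, ← prod_mul_distrib, ← prod_mul_distrib]
    -- step D : bound each factor
    have hkpos : (0 : ℝ) < (k : ℝ) + 1 := by positivity
    have hfac : ∀ m : ℕ, ∏ i ∈ range k, ((m : ℝ) + 1 + i) / (1 + i) ≤ ((k : ℝ) + 1) ^ m := by
      intro m
      have htel := tel m 1 one_pos k
      have : ∏ i ∈ range k, ((m : ℝ) + 1 + i) / (1 + i)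
          = ∏ j ∈ range m, (1 + (k : ℝ) + j) / (1 + j) := by
        rw [← htel]
        exact prod_congr rfl fun i _ => by ring_nf
      rw [this]
      calc ∏ j ∈ range m, (1 + (k : ℝ) + j) / (1 + j)
          ≤ ∏ _j ∈ range m, ((k : ℝ) + 1) := by
            apply Finset.prod_le_prod
            · intro j _; positivity
            · intro j _
              rw [div_le_iff₀ (by positivity)]
              have hj0 : (0 : ℝ) ≤ j := Nat.cast_nonneg j
              nlinarith [(Nat.cast_nonneg k : (0:ℝ) ≤ (k:ℝ))]
        _ = ((k : ℝ) + 1) ^ m := by rw [prod_const, card_range]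
    have hD4 : ∏ i ∈ range k, (u + i) / (u + (S : ℝ) + i) ≤ ((u + S) / ((k : ℝ) + 1)) ^ S := by
      have htel := tel S u hu0 k
      have hinv : ∏ i ∈ range k, (u + i) / (u + (S : ℝ) + i)
          = ∏ j ∈ range S, (u + j) / (u + (k : ℝ) + j) := by
        calc ∏ i ∈ range k, (u + i) / (u + (S : ℝ) + i)
            = ∏ i ∈ range k, ((u + (S : ℝ) + i) / (u + i))⁻¹ :=
              prod_congr rfl fun i _ => (inv_div _ _).symm
          _ = (∏ i ∈ range k, (u + (S : ℝ) + i) / (u + i))⁻¹ := by rw [prod_inv_distrib]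
          _ = (∏ j ∈ range S, (u + (k : ℝ) + j) / (u + j))⁻¹ := by rw [htel]
          _ = ∏ j ∈ range S, (u + j) / (u + (k : ℝ) + j) := by
              rw [← prod_inv_distrib]
              exact prod_congr rfl fun j _ => inv_div _ _
      rw [hinv]
      calc ∏ j ∈ range S, (u + j) / (u + (k : ℝ) + j)
          ≤ ∏ _j ∈ range S, ((u + S) / ((k : ℝ) + 1)) := by
            apply Finset.prod_le_prod
            · intro j _
              have : (0:ℝ) ≤ j := Nat.cast_nonneg j
              positivity
            · intro j hj
              have hjS : (j : ℝ) ≤ S := by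
                have := mem_range.mp hj
                exact_mod_cast this.le
              have hj0 : (0 : ℝ) ≤ j := Nat.cast_nonneg j
              apply div_le_div₀ (by positivity) (by linarith) hkpos
              have : (1 : ℝ) ≤ u := hu1
              have hk0 : (0:ℝ) ≤ k := Nat.cast_nonneg k
              linarith
        _ = ((u + S) / ((k : ℝ) + 1)) ^ S := by rw [prod_const, card_range]
    have hC3 : ∏ i ∈ range k, (1 + (i : ℝ)) / ‖C + i‖ ≤ Mc * ((k : ℝ) + 1) ^ T := hMc k
    -- step E : combine
    have hnn1 : (0:ℝ) ≤ ∏ i ∈ range k, ((mA : ℝ) + 1 + i) / (1 + i) :=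
      prod_nonneg fun i _ => by positivity
    have hnn2 : (0:ℝ) ≤ ∏ i ∈ range k, ((mB : ℝ) + 1 + i) / (1 + i) :=
      prod_nonneg fun i _ => by positivity
    have hnn3 : (0:ℝ) ≤ ∏ i ∈ range k, (1 + (i : ℝ)) / ‖C + i‖ :=
      prod_nonneg fun i _ => by positivity
    have hnn4 : (0:ℝ) ≤ ∏ i ∈ range k, (u + i) / (u + (S : ℝ) + i) :=
      prod_nonneg fun i _ => by
        have : (0:ℝ) ≤ i := Nat.cast_nonneg i
        have : (0:ℝ) ≤ (S:ℝ) := Nat.cast_nonneg S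
        positivity
    have hSnn : (0:ℝ) ≤ (S:ℝ) := Nat.cast_nonneg S
    have hcomb : (∏ i ∈ range k, ((mA : ℝ) + 1 + i) / (1 + i)) *
          (∏ i ∈ range k, ((mB : ℝ) + 1 + i) / (1 + i)) *
          (∏ i ∈ range k, (1 + (i : ℝ)) / ‖C + i‖) *
          (∏ i ∈ range k, (u + i) / (u + (S : ℝ) + i))
        ≤ ((k : ℝ) + 1) ^ mA * ((k : ℝ) + 1) ^ mB * (Mc * ((k : ℝ) + 1) ^ T) *
          ((u + S) / ((k : ℝ) + 1)) ^ S := by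
      apply mul_le_mul _ hD4 hnn4 (by positivity)
      apply mul_le_mul _ hC3 hnn3 (by positivity)
      exact mul_le_mul (hfac mA) (hfac mB) hnn2 (by positivity)
    have hfinal : ((k : ℝ) + 1) ^ mA * ((k : ℝ) + 1) ^ mB * (Mc * ((k : ℝ) + 1) ^ T) *
          ((u + S) / ((k : ℝ) + 1)) ^ S = bound k := by
      rw [hbdef]
      simp only []
      rw [div_pow, hSdef]
      have hne : ((k : ℝ) + 1) ≠ 0 := ne_of_gt hkpos
      field_simp
      rw [pow_add, pow_add, pow_add]
      ring
    calc ∏ i ∈ range k, (‖A + i‖ * ‖B + i‖ * ‖D N + i‖ /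
          ((1 + (i : ℝ)) * ‖(N : ℂ) + δ + i‖ * ‖C + i‖))
        ≤ ∏ i ∈ range k, rhs i := hstepB
      _ = _ := hsplit
      _ ≤ ((k : ℝ) + 1) ^ mA * ((k : ℝ) + 1) ^ mB * (Mc * ((k : ℝ) + 1) ^ T) *
          ((u + S) / ((k : ℝ) + 1)) ^ S := hcomb
      _ = bound k := hfinal
  -- pointwise limits
  have hpoint : ∀ k : ℕ, Tendsto (fun N : ℕ => poch A k * poch B k * poch (D N) k /
      ((k.factorial : ℂ) * poch ((N : ℂ) + δ) k * poch C k)) atTop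
      (nhds (poch A k * poch B k * (q : ℂ) ^ k / ((k.factorial : ℂ) * poch C k))) := by
    intro k
    have hrat := lim_ratio δ hlim k
    have heq : ∀ N : ℕ, poch A k * poch B k * poch (D N) k /
        ((k.factorial : ℂ) * poch ((N : ℂ) + δ) k * poch C k)
        = (poch A k * poch B k / ((k.factorial : ℂ) * poch C k)) *
          (poch (D N) k / poch ((N : ℂ) + δ) k) := by
      intro N
      simp only [div_eq_mul_inv, mul_inv]
      ring
    have htgt : poch A k * poch B k * (q : ℂ) ^ k / ((k.factorial : ℂ) * poch C k)
        = (poch A k * poch B k / ((k.factorial : ℂ) * poch C k)) * (q : ℂ) ^ k := by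
      simp only [div_eq_mul_inv, mul_inv]
      ring
    rw [htgt]
    simp only [heq]
    exact hrat.const_mul _
  constructor
  · rw [eventually_atTop]
    exact ⟨N₁, fun N hN => Summable.of_norm_bounded hbound_sum (hdom N hN)⟩
  · exact tendsto_tsum_of_dominated_convergence hbound_sum hpoint
      (eventually_atTop.mpr ⟨N₁, hdom⟩)
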